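/- Let n, j ∈ ℕ, K > 0, and ε₁ > 0. Suppose for each real ε ∈ (0,ε₁) we are given a unitary matrix U(ε) on ℂⁿ, complex numbers λ₁(ε), …, λ_j(ε), and unit vectors V₁(ε), …, V_j(ε) with U(ε)·V_i(ε) = λ_i(ε)·V_i(ε) for each i, together with an orthonormal family V₁(0), …, V_j(0) in ℂⁿ satisfying ‖V_i(ε) − V_i(0)‖ ≤ K·√ε for all i and all ε ∈ (0,ε₁). Let S = span{V₁(0), …, V_j(0)} and let P_{S⊥} be the orthogonal projection onto the orthogonal complement of S. Then there is a constant K′ > 0 such that for every u ∈ S with ‖u‖ ≤ 1, every m ∈ ℕ, and every ε ∈ (0,ε₁): ‖P_{S⊥}·U(ε)^m·u‖ ≤ K′·√ε. (Theorem 4.4: a state initialized in the span of the ε = 0 eigenvectors stays in that span, up to an error O(√ε), under arbitrarily many applications of U.) -/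

import Mathlib

open Matrix in
lemma aux_mul {n : ℕ} (A B : Matrix (Fin n) (Fin n) ℂ) (x : EuclideanSpace ℂ (Fin n)) :
    Matrix.toEuclideanLin (A * B) x = Matrix.toEuclideanLin A (Matrix.toEuclideanLin B x) := by
  simp [Matrix.toEuclideanLin_apply, Matrix.mulVec_mulVec]

open Matrix in
lemma aux_norm {n : ℕ} (A : Matrix (Fin n) (Fin n) ℂ) (hA : A ∈ Matrix.unitaryGroup (Fin n) ℂ)
    (x : EuclideanSpace ℂ (Fin n)) : ‖Matrix.toEuclideanLin A x‖ = ‖x‖ := by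
  have h1 : Aᴴ * A = 1 := hA.1
  have had := Matrix.toEuclideanLin_conjTranspose_eq_adjoint A
  have key : (inner ℂ (Matrix.toEuclideanLin A x) (Matrix.toEuclideanLin A x) : ℂ)
      = inner ℂ x x := by
    rw [← LinearMap.adjoint_inner_left, ← had, ← aux_mul, h1]
    simp [Matrix.toEuclideanLin_apply]
  rw [inner_self_eq_norm_sq_to_K (𝕜 := ℂ), inner_self_eq_norm_sq_to_K (𝕜 := ℂ)] at key
  have h3 : (‖Matrix.toEuclideanLin A x‖ : ℝ) ^ 2 = ‖x‖ ^ 2 := by exact_mod_cast key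
  nlinarith [norm_nonneg (Matrix.toEuclideanLin A x), norm_nonneg x]

lemma aux_pow {n : ℕ} (A : Matrix (Fin n) (Fin n) ℂ) (lam : ℂ)
    (v : EuclideanSpace ℂ (Fin n)) (h : Matrix.toEuclideanLin A v = lam • v) (m : ℕ) :
    Matrix.toEuclideanLin (A ^ m) v = lam ^ m • v := by
  induction m with
  | zero => simp [Matrix.toEuclideanLin_apply, Matrix.one_mulVec]
  | succ m ih =>
      rw [pow_succ', aux_mul, ih, map_smul, h, smul_smul, pow_succ', mul_comm]

/-- Theorem 4.4: a state initialized in the span `S` of the `ε = 0` eigenvectors stays in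
that span, up to an error `O(√ε)`, under arbitrarily many applications of `U(ε)`:
`‖P_{S⊥} U(ε)^m u‖ ≤ K′√ε`. -/
theorem stmt5 (n j : ℕ) (K : ℝ) (hK : 0 < K) (ε₁ : ℝ) (hε₁ : 0 < ε₁)
    (U : ℝ → Matrix (Fin n) (Fin n) ℂ)
    (l : Fin j → ℝ → ℂ)
    (V : Fin j → ℝ → EuclideanSpace ℂ (Fin n))
    (V0 : Fin j → EuclideanSpace ℂ (Fin n))
    (hU : ∀ ε ∈ Set.Ioo (0 : ℝ) ε₁, U ε ∈ Matrix.unitaryGroup (Fin n) ℂ)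
    (hVnorm : ∀ i, ∀ ε ∈ Set.Ioo (0 : ℝ) ε₁, ‖V i ε‖ = 1)
    (heig : ∀ i, ∀ ε ∈ Set.Ioo (0 : ℝ) ε₁,
      Matrix.toEuclideanLin (U ε) (V i ε) = l i ε • V i ε)
    (hV0 : Orthonormal ℂ V0)
    (hclose : ∀ i, ∀ ε ∈ Set.Ioo (0 : ℝ) ε₁, ‖V i ε - V0 i‖ ≤ K * Real.sqrt ε) :
    ∃ K' > (0 : ℝ), ∀ u ∈ Submodule.span ℂ (Set.range V0), ‖u‖ ≤ 1 →
      ∀ m : ℕ, ∀ ε ∈ Set.Ioo (0 : ℝ) ε₁,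
        ‖Submodule.orthogonalProjection (Submodule.span ℂ (Set.range V0))ᗮ
            (Matrix.toEuclideanLin (U ε ^ m) u)‖ ≤ K' * Real.sqrt ε := by
  set S := Submodule.span ℂ (Set.range V0) with hS
  refine ⟨(2 * j + 2) * K, by positivity, ?_⟩
  intro u hu hnorm m ε hε
  have hε0 : 0 < ε := hε.1
  have hsqrt : 0 ≤ Real.sqrt ε := Real.sqrt_nonneg ε
  have hKε : 0 ≤ K * Real.sqrt ε := by positivity
  -- coefficients
  obtain ⟨c, hcu⟩ := (Submodule.mem_span_range_iff_exists_fun ℂ).mp hu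
  have hcbound : ∀ i, ‖c i‖ ≤ 1 := by
    intro i
    have h1 : c i = inner ℂ (V0 i) u := by
      rw [← hcu, hV0.inner_right_fintype]
    have h2 : ‖(inner ℂ (V0 i) u : ℂ)‖ ≤ ‖V0 i‖ * ‖u‖ := norm_inner_le_norm _ _
    rw [hV0.1 i, one_mul] at h2
    rw [h1]; exact h2.trans hnorm
  -- eigenvalue modulus one
  have hl : ∀ i, ‖l i ε‖ = 1 := by
    intro i
    have h1 := aux_norm (U ε) (hU ε hε) (V i ε)
    rw [heig i ε hε, norm_smul, hVnorm i ε hε] at h1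
    simpa using h1
  -- unitary power isometry
  have hmU : U ε ^ m ∈ Matrix.unitaryGroup (Fin n) ℂ := pow_mem (hU ε hε) m
  have hiso : ∀ x, ‖Matrix.toEuclideanLin (U ε ^ m) x‖ = ‖x‖ := aux_norm _ hmU
  set T := Matrix.toEuclideanLin (U ε ^ m) with hT
  set w : EuclideanSpace ℂ (Fin n) := ∑ i, c i • V i ε with hw
  set z : EuclideanSpace ℂ (Fin n) := ∑ i, (c i * (l i ε) ^ m) • V0 i with hz
  have hzS : z ∈ S := Submodule.sum_mem _ fun i _ =>
    Submodule.smul_mem _ _ (Submodule.subset_span (Set.mem_range_self i))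
  have hTw : T w = ∑ i, (c i * (l i ε) ^ m) • V i ε := by
    rw [hw, map_sum]
    refine Finset.sum_congr rfl fun i _ => ?_
    rw [map_smul, aux_pow (U ε) (l i ε) (V i ε) (heig i ε hε) m, smul_smul]
  -- bound 1
  have hb1 : ‖u - w‖ ≤ j * (K * Real.sqrt ε) := by
    have : u - w = ∑ i, c i • (V0 i - V i ε) := by
      rw [← hcu, hw, ← Finset.sum_sub_distrib]
      exact Finset.sum_congr rfl fun i _ => (smul_sub _ _ _).symm
    rw [this]
    calc ‖∑ i, c i • (V0 i - V i ε)‖ ≤ ∑ i : Fin j, ‖c i • (V0 i - V i ε)‖ :=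
          norm_sum_le _ _
      _ ≤ ∑ i : Fin j, K * Real.sqrt ε := by
          refine Finset.sum_le_sum fun i _ => ?_
          rw [norm_smul, norm_sub_rev]
          calc ‖c i‖ * ‖V i ε - V0 i‖ ≤ 1 * (K * Real.sqrt ε) :=
                mul_le_mul (hcbound i) (hclose i ε hε) (norm_nonneg _) zero_le_one
            _ = K * Real.sqrt ε := one_mul _
      _ = j * (K * Real.sqrt ε) := by simp [Finset.sum_const, Finset.card_univ]
  -- bound 2
  have hb2 : ‖T w - z‖ ≤ j * (K * Real.sqrt ε) := by
    have : T w - z = ∑ i, (c i * (l i ε) ^ m) • (V i ε - V0 i) := by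
      rw [hTw, hz, ← Finset.sum_sub_distrib]
      exact Finset.sum_congr rfl fun i _ => (smul_sub _ _ _).symm
    rw [this]
    calc ‖∑ i, (c i * (l i ε) ^ m) • (V i ε - V0 i)‖
        ≤ ∑ i : Fin j, ‖(c i * (l i ε) ^ m) • (V i ε - V0 i)‖ := norm_sum_le _ _
      _ ≤ ∑ i : Fin j, K * Real.sqrt ε := by
          refine Finset.sum_le_sum fun i _ => ?_
          rw [norm_smul, norm_mul, norm_pow, hl i, one_pow, mul_one]
          calc ‖c i‖ * ‖V i ε - V0 i‖ ≤ 1 * (K * Real.sqrt ε) :=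
                mul_le_mul (hcbound i) (hclose i ε hε) (norm_nonneg _) zero_le_one
            _ = K * Real.sqrt ε := one_mul _
      _ = j * (K * Real.sqrt ε) := by simp [Finset.sum_const, Finset.card_univ]
  -- combine
  have hfinal : ‖T u - z‖ ≤ 2 * j * (K * Real.sqrt ε) := by
    calc ‖T u - z‖ = ‖(T u - T w) + (T w - z)‖ := by rw [sub_add_sub_cancel]
      _ ≤ ‖T u - T w‖ + ‖T w - z‖ := norm_add_le _ _
      _ = ‖u - w‖ + ‖T w - z‖ := by rw [← map_sub, hiso]
      _ ≤ j * (K * Real.sqrt ε) + j * (K * Real.sqrt ε) := add_le_add hb1 hb2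
      _ = 2 * j * (K * Real.sqrt ε) := by ring
  have hPz : Submodule.orthogonalProjection Sᗮ z = 0 :=
    Submodule.orthogonalProjection_orthogonal_apply_eq_zero hzS
  have hP : ‖Submodule.orthogonalProjection Sᗮ (T u)‖ ≤ ‖T u - z‖ := by
    have h1 : Submodule.orthogonalProjection Sᗮ (T u) = Submodule.orthogonalProjection Sᗮ (T u - z) := by
      rw [map_sub, hPz, sub_zero]
    rw [h1]
    calc ‖Submodule.orthogonalProjection Sᗮ (T u - z)‖
        ≤ ‖Submodule.orthogonalProjection Sᗮ‖ * ‖T u - z‖ :=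
          (Submodule.orthogonalProjection Sᗮ).le_opNorm _
      _ ≤ 1 * ‖T u - z‖ := by
          exact mul_le_mul_of_nonneg_right (Submodule.orthogonalProjection_norm_le Sᗮ) (norm_nonneg _)
      _ = ‖T u - z‖ := one_mul _
  calc ‖Submodule.orthogonalProjection Sᗮ (T u)‖ ≤ ‖T u - z‖ := hP
    _ ≤ 2 * j * (K * Real.sqrt ε) := hfinal
    _ ≤ (2 * j + 2) * K * Real.sqrt ε := by nlinarith
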